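/- Let r ∈ ℕ, A ⊆ ℕ an IP*-set in (ℕ, +), and B ⊆ ℕ an IP_r*-set in (ℕ, +). Then there exists k ∈ A such that k·ℕ ⊆ A·B = {ab : a ∈ A, b ∈ B}. -/

import Mathlib

/-- `A` is an `IP⋆`-set in `(ℕ,+)` (`ℕ` meaning the positive integers): `A` meets
the set of finite sums of every sequence of positive integers. -/
def IPStarNat (A : Set ℕ) : Prop :=
  ∀ x : ℕ → ℕ, (∀ n, 0 < x n) →
    ∃ H : Finset ℕ, H.Nonempty ∧ (∑ n ∈ H, x n) ∈ A

/-- `B` is an `IP_r⋆`-set in `(ℕ,+)`: it meets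
`FS({x_n}_{n=1}^r) = {∑_{n ∈ H} x_n : ∅ ≠ H ⊆ {1, …, r}}` for every finite
sequence of positive integers. -/
def IPrStarNat (r : ℕ) (B : Set ℕ) : Prop :=
  ∀ x : ℕ → ℕ, (∀ n, 0 < x n) →
    ∃ H : Finset ℕ, H ⊆ Finset.Icc 1 r ∧ H.Nonempty ∧ (∑ n ∈ H, x n) ∈ B



lemma pos_of_mem_FS {a : Stream' ℕ} (ha : ∀ n, 0 < a.get n) {m : ℕ}
    (hm : m ∈ Hindman.FS a) : 0 < m := by
  induction hm with
  | head' a => exact ha 0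
  | tail' a m _ ih => exact ih fun n => ha (n+1)
  | cons' a m _ ih => exact Nat.add_pos_left (ha 0) _

lemma IPStar_meets_FS {A : Set ℕ} (hA : IPStarNat A) (a : Stream' ℕ)
    (ha : ∀ n, 0 < a.get n) : ∃ m ∈ A, m ∈ Hindman.FS a := by
  obtain ⟨H, hHne, hHA⟩ := hA (fun n => a.get n) ha
  exact ⟨_, hHA, Hindman.FS.finset_sum a H hHne⟩

lemma refine_FS {A : Set ℕ} (hA : IPStarNat A) (a : Stream' ℕ)
    (ha : ∀ n, 0 < a.get n) :
    ∃ b : Stream' ℕ, (∀ n, 0 < b.get n) ∧ Hindman.FS b ⊆ A ∩ Hindman.FS a := by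
  have hcov : Hindman.FS a ⊆ ⋃₀ {A ∩ Hindman.FS a, Aᶜ ∩ Hindman.FS a} := by
    intro m hm
    by_cases h : m ∈ A
    · exact ⟨_, Set.mem_insert _ _, h, hm⟩
    · exact ⟨_, Set.mem_insert_of_mem _ rfl, h, hm⟩
  obtain ⟨c, hc, b, hb⟩ := Hindman.FS_partition_regular a _
    ((Set.finite_singleton _).insert _) hcov
  have hsub : Hindman.FS b ⊆ Hindman.FS a := by
    rcases hc with rfl | rfl
    · exact hb.trans Set.inter_subset_right
    · exact hb.trans Set.inter_subset_right
  have hbpos : ∀ n, 0 < b.get n :=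
    fun n => pos_of_mem_FS ha (hsub (Hindman.FS.singleton b n))
  rcases hc with rfl | rfl
  · exact ⟨b, hbpos, hb⟩
  · obtain ⟨m, hmA, hmFS⟩ := IPStar_meets_FS hA b hbpos
    exact absurd hmA (hb hmFS).1

lemma common_point {s : Finset ℕ} {C : ℕ → Set ℕ}
    (hC : ∀ j ∈ s, IPStarNat (C j)) :
    ∃ t, 0 < t ∧ ∀ j ∈ s, t ∈ C j := by
  suffices h : ∃ b : Stream' ℕ, (∀ n, 0 < b.get n) ∧ ∀ j ∈ s, Hindman.FS b ⊆ C j by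
    obtain ⟨b, hbpos, hb⟩ := h
    exact ⟨b.get 0, hbpos 0, fun j hj => hb j hj (Hindman.FS.singleton b 0)⟩
  classical
  induction s using Finset.induction with
  | empty => exact ⟨fun _ => 1, fun _ => one_pos, by simp⟩
  | @insert j s hj ih =>
    obtain ⟨b, hbpos, hb⟩ := ih fun i hi => hC i (Finset.mem_insert_of_mem hi)
    obtain ⟨b', hb'pos, hb'⟩ := refine_FS (hC j (Finset.mem_insert_self j s)) b hbpos
    refine ⟨b', hb'pos, fun i hi => ?_⟩
    rcases Finset.mem_insert.mp hi with rfl | hi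
    · exact hb'.trans Set.inter_subset_left
    · exact (hb'.trans Set.inter_subset_right).trans (hb i hi)

/-- Goswami's theorem: if `A` is an `IP⋆`-set and `B` an `IP_r⋆`-set in `(ℕ,+)`,
then there is `k ∈ A` with `k·ℕ ⊆ A·B`. -/
theorem stmt_10 (r : ℕ) (hr : 0 < r) (A B : Set ℕ)
    (hA : IPStarNat A) (hB : IPrStarNat r B) :
    ∃ k ∈ A, ∀ n : ℕ, 0 < n → ∃ a ∈ A, ∃ b ∈ B, k * n = a * b := by
  set C : ℕ → Set ℕ := fun j => {t | (r.factorial / j) * t ∈ A} with hCdef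
  have hC : ∀ j ∈ Finset.Icc 1 r, IPStarNat (C j) := by
    intro j hj x hx
    obtain ⟨hj1, hjr⟩ := Finset.mem_Icc.mp hj
    have hdvd : j ∣ r.factorial := Nat.dvd_factorial hj1 hjr
    have hqpos : 0 < r.factorial / j :=
      Nat.div_pos (Nat.le_of_dvd r.factorial_pos hdvd) hj1
    obtain ⟨H, hHne, hHA⟩ := hA (fun n => (r.factorial / j) * x n)
      (fun n => Nat.mul_pos hqpos (hx n))
    refine ⟨H, hHne, ?_⟩
    simpa [hCdef, Finset.mul_sum] using hHA
  obtain ⟨t, htpos, ht⟩ := common_point hC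
  have h1 : (1 : ℕ) ∈ Finset.Icc 1 r := Finset.mem_Icc.mpr ⟨le_refl 1, hr⟩
  refine ⟨r.factorial * t, by simpa [hCdef, Nat.div_one] using ht 1 h1, fun n hn => ?_⟩
  obtain ⟨H, hHsub, hHne, hHB⟩ := hB (fun _ => n) (fun _ => hn)
  set j := H.card with hjdef
  have hj1 : 1 ≤ j := Finset.card_pos.mpr hHne
  have hjr : j ≤ r := by
    have := Finset.card_le_card hHsub
    simpa using this
  have hdvd : j ∣ r.factorial := Nat.dvd_factorial hj1 hjr
  refine ⟨(r.factorial / j) * t, ht j (Finset.mem_Icc.mpr ⟨hj1, hjr⟩), j * n, ?_, ?_⟩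
  · simpa [hjdef, Finset.sum_const, smul_eq_mul] using hHB
  · have : r.factorial / j * j = r.factorial := Nat.div_mul_cancel hdvd
    calc r.factorial * t * n = (r.factorial / j * j) * t * n := by rw [this]
      _ = r.factorial / j * t * (j * n) := by ring
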